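/- For every integer n ≥ 3, the map T_n satisfies T_n(V*_{n+}) = V_{n+}, and T_n(e_n(i)) = (1/2)·ω_n(i) for all i when n is even, while e_n(i) = R_n·ω_n(i) for all i and V*_{n+} = V_{n+} when n is odd. In particular every regular polygon theory is weakly self-dual, and every odd-sided regular polygon theory is self-dual. -/

import Mathlib

noncomputable section

/-- Standard inner product on `ℝ³`. -/
def dot3 (v w : Fin 3 → ℝ) : ℝ := ∑ i, v i * w i

/-- The angle `θ_n = π / n`. -/
def thetaN (n : ℕ) : ℝ := Real.pi / n

/-- `r_n = (cos θ_n)^{-1/2}`. -/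
def rN (n : ℕ) : ℝ := Real.sqrt (Real.cos (thetaN n))⁻¹

/-- `R_n = 1 / (1 + r_n²)`. -/
def RN (n : ℕ) : ℝ := 1 / (1 + rN n ^ 2)

/-- The pure states `ω_n(i)` of the regular polygon theory. -/
def omegaN (n i : ℕ) : Fin 3 → ℝ :=
  ![rN n * Real.cos (2 * (i : ℝ) * thetaN n), rN n * Real.sin (2 * (i : ℝ) * thetaN n), 1]

/-- The state space `Ω_n`, the convex hull of the pure states. -/
def OmegaN (n : ℕ) : Set (Fin 3 → ℝ) :=
  convexHull ℝ {v | ∃ i < n, v = omegaN n i}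

/-- The unit effect `u = (0,0,1)`. -/
def uEff : Fin 3 → ℝ := ![0, 0, 1]

/-- The pure effects `e_n(i)` (separate formulas for even and odd `n`). -/
def eN (n i : ℕ) : Fin 3 → ℝ :=
  if Even n then
    (1 / 2 : ℝ) • ![rN n * Real.cos ((2 * (i : ℝ) + 1) * thetaN n),
                    rN n * Real.sin ((2 * (i : ℝ) + 1) * thetaN n), 1]
  else
    RN n • ![rN n * Real.cos (2 * (i : ℝ) * thetaN n),
             rN n * Real.sin (2 * (i : ℝ) * thetaN n), 1]

/-- The complementary effect `ē_n(i) = u - e_n(i)`. -/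
def eBarN (n i : ℕ) : Fin 3 → ℝ := uEff - eN n i

/-- The effect space `E_n`. -/
def EffN (n : ℕ) : Set (Fin 3 → ℝ) :=
  {f | ∀ ω ∈ OmegaN n, dot3 f ω ∈ Set.Icc (0 : ℝ) 1}

/-- The positive cone `V_{n+}` generated by the state space. -/
def VposN (n : ℕ) : Set (Fin 3 → ℝ) :=
  {x | ∃ c : ℝ, 0 ≤ c ∧ ∃ ω ∈ OmegaN n, x = c • ω}

/-- The dual cone `V*_{n+}` generated by the effect space. -/
def VdualN (n : ℕ) : Set (Fin 3 → ℝ) :=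
  {x | ∃ c : ℝ, 0 ≤ c ∧ ∃ f ∈ EffN n, x = c • f}

/-- A state of `Ω_n ⊗_max Ω_n`, identified with a normalized cone-preserving linear map. -/
def IsState (n : ℕ) (η : (Fin 3 → ℝ) →ₗ[ℝ] (Fin 3 → ℝ)) : Prop :=
  (∀ x ∈ VdualN n, η x ∈ VposN n) ∧ dot3 uEff (η uEff) = 1

/-- A binary observable on `Ω_n`: a pair of effects summing to the unit effect. -/
def IsObservable (n : ℕ) (A : (Fin 3 → ℝ) × (Fin 3 → ℝ)) : Prop :=
  A.1 ∈ EffN n ∧ A.2 ∈ EffN n ∧ A.1 + A.2 = uEff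

/-- The observable `E_n(i) = (e_n(i), ē_n(i))`. -/
def EObs (n i : ℕ) : (Fin 3 → ℝ) × (Fin 3 → ℝ) := (eN n i, eBarN n i)

/-- The correlator `E(st) = Σ_{a,b} (-1)^{a+b} ⟨B^b, η(A^a)⟩`. -/
def corr (η : (Fin 3 → ℝ) →ₗ[ℝ] (Fin 3 → ℝ)) (A B : (Fin 3 → ℝ) × (Fin 3 → ℝ)) : ℝ :=
  dot3 B.1 (η A.1) - dot3 B.2 (η A.1) - dot3 B.1 (η A.2) + dot3 B.2 (η A.2)

/-- The CHSH value `C[η; A₀,A₁; B₀,B₁] = E(00) + E(01) + E(10) - E(11)`. -/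
def CHSH (η : (Fin 3 → ℝ) →ₗ[ℝ] (Fin 3 → ℝ))
    (A0 A1 B0 B1 : (Fin 3 → ℝ) × (Fin 3 → ℝ)) : ℝ :=
  corr η A0 B0 + corr η A0 B1 + corr η A1 B0 - corr η A1 B1

/-- `GL(Ω_n)`: linear bijections of `ℝ³` preserving the state space. -/
def GLOmega (n : ℕ) : Set ((Fin 3 → ℝ) →ₗ[ℝ] (Fin 3 → ℝ)) :=
  {T | Function.Bijective T ∧ T '' OmegaN n = OmegaN n}

/-- The order isomorphism `T_n`: a rotation by `θ_n` for even `n`, the identity for odd `n`. -/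
def TN (n : ℕ) : (Fin 3 → ℝ) →ₗ[ℝ] (Fin 3 → ℝ) :=
  if Even n then
    Matrix.toLin' !![Real.cos (thetaN n), Real.sin (thetaN n), 0;
                     -Real.sin (thetaN n), Real.cos (thetaN n), 0;
                     0, 0, 1]
  else LinearMap.id

/-- Maximally entangled states: elements of `T_n · GL(Ω_n)`. -/
def MaxEnt (n : ℕ) (η : (Fin 3 → ℝ) →ₗ[ℝ] (Fin 3 → ℝ)) : Prop :=
  ∃ T ∈ GLOmega n, η = (TN n).comp T

open Real Finset

section Aux
variable (n : ℕ)

lemma n_pos (hn : 3 ≤ n) : (0:ℝ) < n := by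
  have : (3:ℝ) ≤ n := by exact_mod_cast hn
  linarith

lemma theta_pos (hn : 3 ≤ n) : 0 < thetaN n :=
  div_pos Real.pi_pos (n_pos n hn)

lemma theta_lt (hn : 3 ≤ n) : thetaN n < π / 2 := by
  have h3 : (3:ℝ) ≤ n := by exact_mod_cast hn
  have : thetaN n ≤ π / 3 := by
    unfold thetaN
    apply div_le_div_of_nonneg_left Real.pi_pos.le (by norm_num) h3
  linarith [Real.pi_pos]

lemma cos_theta_pos (hn : 3 ≤ n) : 0 < Real.cos (thetaN n) := by
  apply Real.cos_pos_of_mem_Ioo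
  constructor
  · linarith [theta_pos n hn, Real.pi_pos]
  · exact theta_lt n hn

lemma rN_sq (hn : 3 ≤ n) : rN n ^ 2 = (Real.cos (thetaN n))⁻¹ := by
  unfold rN
  rw [Real.sq_sqrt]
  exact inv_nonneg.mpr (cos_theta_pos n hn).le

lemma rN_sq_cos (hn : 3 ≤ n) : rN n ^ 2 * Real.cos (thetaN n) = 1 := by
  rw [rN_sq n hn]
  exact inv_mul_cancel₀ (cos_theta_pos n hn).ne'

lemma rN_nonneg : 0 ≤ rN n := Real.sqrt_nonneg _

lemma rN_pos (hn : 3 ≤ n) : 0 < rN n := by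
  have h := rN_sq_cos n hn
  rcases (rN_nonneg n).lt_or_eq with h1 | h1
  · exact h1
  · rw [← h1] at h; norm_num at h

lemma n_theta (hn : 3 ≤ n) : (n:ℝ) * thetaN n = π := by
  unfold thetaN
  field_simp

lemma dot3_eval (x : Fin 3 → ℝ) (d e f : ℝ) :
    dot3 x ![d,e,f] = x 0 * d + x 1 * e + x 2 * f := by
  simp [dot3, Fin.sum_univ_three]

lemma dot3_eval' (a b c : ℝ) (y : Fin 3 → ℝ) :
    dot3 ![a,b,c] y = a * y 0 + b * y 1 + c * y 2 := by
  simp [dot3, Fin.sum_univ_three]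

lemma dot3_smul_right (x : Fin 3 → ℝ) (c : ℝ) (y : Fin 3 → ℝ) :
    dot3 x (c • y) = c * dot3 x y := by
  simp [dot3, Finset.mul_sum]
  congr 1; funext i; ring

lemma dot3_smul_left (c : ℝ) (x y : Fin 3 → ℝ) :
    dot3 (c • x) y = c * dot3 x y := by
  simp [dot3, Finset.mul_sum]
  congr 1; funext i; ring

lemma dot3_comm (x y : Fin 3 → ℝ) : dot3 x y = dot3 y x := by
  simp [dot3, mul_comm]

lemma isLinearMap_dot3 (f : Fin 3 → ℝ) : IsLinearMap ℝ (fun w => dot3 f w) := by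
  constructor
  · intro a b; simp [dot3, mul_add, Finset.sum_add_distrib]
  · intro c a; simp [dot3, Finset.mul_sum]; congr 1; funext i; ring

end Aux
section Aux2
open Real Finset
variable (n : ℕ)

lemma two_n_theta (hn : 3 ≤ n) : 2 * (n:ℝ) * thetaN n = 2 * π := by
  have := n_theta n hn; linarith

lemma cos_shift (hn : 3 ≤ n) (k q : ℤ) :
    Real.cos (((k + 2*(n:ℤ)*q : ℤ):ℝ) * thetaN n) = Real.cos ((k:ℝ) * thetaN n) := by
  have h : ((k + 2*(n:ℤ)*q : ℤ):ℝ) * thetaN n = (k:ℝ) * thetaN n + (q:ℝ) * (2*π) := by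
    push_cast
    rw [← two_n_theta n hn]
    ring
  rw [h, Real.cos_add_int_mul_two_pi]

lemma sin_shift (hn : 3 ≤ n) (k q : ℤ) :
    Real.sin (((k + 2*(n:ℤ)*q : ℤ):ℝ) * thetaN n) = Real.sin ((k:ℝ) * thetaN n) := by
  have h : ((k + 2*(n:ℤ)*q : ℤ):ℝ) * thetaN n = (k:ℝ) * thetaN n + (q:ℝ) * (2*π) := by
    push_cast
    rw [← two_n_theta n hn]
    ring
  rw [h]
  exact Real.sin_add_int_mul_two_pi _ q

lemma cos_bound (hn : 3 ≤ n) (m : ℤ) (hm : Odd (m + n)) :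
    -Real.cos (thetaN n) ≤ Real.cos ((m:ℝ) * thetaN n) := by
  set θ := thetaN n with hθ
  have hθpos := theta_pos n hn
  have hNpos : (0:ℤ) < 2*(n:ℤ) := by positivity
  set k : ℤ := m % (2*(n:ℤ)) with hk
  have hk0 : 0 ≤ k := Int.emod_nonneg _ (ne_of_gt hNpos)
  have hk2 : k < 2*(n:ℤ) := Int.emod_lt_of_pos _ hNpos
  have hmk : m = k + 2*(n:ℤ) * (m / (2*(n:ℤ))) := by
    rw [hk]; rw [Int.emod_def]; ring
  have hcos : Real.cos ((m:ℝ) * θ) = Real.cos ((k:ℝ) * θ) := by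
    conv_lhs => rw [hmk]
    exact cos_shift n hn k _
  rw [hcos]
  have hkn : k ≠ (n:ℤ) := by
    intro h
    have : m + n = 2*(n:ℤ) * (m / (2*(n:ℤ))) + 2*n := by omega
    rw [this] at hm
    exact (Int.not_odd_iff_even.mpr ⟨(n : ℤ) * (m / (2*(n:ℤ))) + n, by ring⟩) hm
  have key : ∀ j : ℤ, 0 ≤ j → j < (n:ℤ) →
      -Real.cos θ ≤ Real.cos ((j:ℝ) * θ) := by
    intro j hj0 hjn
    have h1 : Real.cos (π - θ) = -Real.cos θ := Real.cos_pi_sub θ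
    rw [← h1]
    apply Real.cos_le_cos_of_nonneg_of_le_pi
    · positivity
    · linarith [n_theta n hn, hθpos]
    · have : ((j:ℝ)+1) * θ ≤ (n:ℝ) * θ := by
        apply mul_le_mul_of_nonneg_right _ hθpos.le
        have : (j:ℝ) + 1 ≤ (n:ℝ) := by exact_mod_cast hjn
        linarith
      rw [n_theta n hn] at this
      linarith
  rcases lt_or_gt_of_ne hkn with h | h
  · exact key k hk0 h
  · have h2 : Real.cos ((k:ℝ)*θ) = Real.cos (((2*(n:ℤ)-k : ℤ):ℝ)*θ) := by
      have : ((k:ℝ))*θ = 2*π - ((2*(n:ℤ)-k : ℤ):ℝ)*θ := by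
        push_cast
        have := two_n_theta n hn
        nlinarith
      rw [this, Real.cos_two_pi_sub]
    rw [h2]
    apply key
    · omega
    · omega

lemma sum_exp_eq_zero (hn : 3 ≤ n) :
    ∑ j ∈ Finset.range n, Complex.exp ((2*(j:ℝ)*thetaN n : ℝ) * Complex.I) = 0 := by
  have hne : (n:ℝ) ≠ 0 := (n_pos n hn).ne'
  set z : ℂ := Complex.exp ((2*thetaN n : ℝ) * Complex.I) with hz
  have hzj : ∀ j : ℕ, Complex.exp ((2*(j:ℝ)*thetaN n : ℝ) * Complex.I) = z ^ j := by
    intro j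
    rw [hz, ← Complex.exp_nat_mul]
    congr 1
    push_cast
    ring
  have hzn : z ^ n = 1 := by
    rw [hz, ← Complex.exp_nat_mul]
    have : (n:ℂ) * ((2*thetaN n : ℝ) * Complex.I) = (2*π:ℝ) * Complex.I := by
      have h2 := two_n_theta n hn
      push_cast
      rw [show ((n:ℂ) * ((2*(thetaN n):ℂ) * Complex.I)) = ((2*(n:ℝ)*thetaN n :ℝ):ℂ) * Complex.I by push_cast; ring, h2]
      push_cast; ring
    rw [this]
    simpa using Complex.exp_int_mul_two_pi_mul_I 1
  have hz1 : z ≠ 1 := by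
    rw [hz]
    intro h
    rw [Complex.exp_eq_one_iff] at h
    obtain ⟨k, hk⟩ := h
    have h3 : ((2*thetaN n : ℝ):ℂ) * Complex.I = (((k:ℝ) * (2*π) : ℝ):ℂ) * Complex.I := by
      rw [hk]; push_cast; ring
    have h4 := mul_right_cancel₀ Complex.I_ne_zero h3
    have hreal : 2*thetaN n = (k:ℝ) * (2*π) := by exact_mod_cast h4
    have hθpos := theta_pos n hn
    have hθlt : thetaN n < π := by
      have := theta_lt n hn; linarith [Real.pi_pos]
    have hk0 : (0:ℝ) < (k:ℝ) := by nlinarith [Real.pi_pos]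
    have hk1 : (k:ℝ) < 1 := by nlinarith [Real.pi_pos]
    have : (0:ℤ) < k := by exact_mod_cast hk0
    have : (k:ℤ) < 1 := by exact_mod_cast hk1
    omega
  calc ∑ j ∈ Finset.range n, Complex.exp ((2*(j:ℝ)*thetaN n : ℝ) * Complex.I)
      = ∑ j ∈ Finset.range n, z ^ j := by
        apply Finset.sum_congr rfl; intro j _; exact hzj j
    _ = (z ^ n - 1) / (z - 1) := geom_sum_eq hz1 n
    _ = 0 := by rw [hzn]; simp

lemma sum_cos_sin_eq_zero (hn : 3 ≤ n) :
    (∑ j ∈ Finset.range n, Real.cos (2*(j:ℝ)*thetaN n)) = 0 ∧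
    (∑ j ∈ Finset.range n, Real.sin (2*(j:ℝ)*thetaN n)) = 0 := by
  have h := sum_exp_eq_zero n hn
  set C : ℝ := ∑ j ∈ Finset.range n, Real.cos (2*(j:ℝ)*thetaN n) with hCdef
  set S : ℝ := ∑ j ∈ Finset.range n, Real.sin (2*(j:ℝ)*thetaN n) with hSdef
  have h2 : (C:ℂ) + (S:ℂ) * Complex.I = 0 := by
    rw [hCdef, hSdef]
    push_cast
    rw [Finset.sum_mul, ← Finset.sum_add_distrib, ← h]
    apply Finset.sum_congr rfl
    intro j _
    rw [Complex.exp_mul_I, ← Complex.ofReal_cos, ← Complex.ofReal_sin]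
    push_cast
    ring
  rw [Complex.ext_iff] at h2
  simp at h2
  exact h2

end Aux2
section Aux3
open Real Finset
variable (n : ℕ)

lemma omega_mem (i : ℕ) (hi : i < n) : omegaN n i ∈ OmegaN n :=
  subset_convexHull ℝ _ ⟨i, hi, rfl⟩

lemma effN_iff (f : Fin 3 → ℝ) :
    f ∈ EffN n ↔ ∀ i < n, dot3 f (omegaN n i) ∈ Set.Icc (0:ℝ) 1 := by
  constructor
  · intro hf i hi
    exact hf _ (omega_mem n i hi)
  · intro hf ω hω
    have hL := isLinearMap_dot3 f
    have hconv : Convex ℝ {w : Fin 3 → ℝ | dot3 f w ∈ Set.Icc (0:ℝ) 1} := by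
      have h1 : Convex ℝ {w : Fin 3 → ℝ | 0 ≤ dot3 f w} := convex_halfSpace_ge hL 0
      have h2 : Convex ℝ {w : Fin 3 → ℝ | dot3 f w ≤ 1} := convex_halfSpace_le hL 1
      have : {w : Fin 3 → ℝ | dot3 f w ∈ Set.Icc (0:ℝ) 1}
          = {w : Fin 3 → ℝ | 0 ≤ dot3 f w} ∩ {w : Fin 3 → ℝ | dot3 f w ≤ 1} := by
        ext w; simp [Set.mem_Icc]
      rw [this]; exact h1.inter h2
    have hsub : OmegaN n ⊆ {w : Fin 3 → ℝ | dot3 f w ∈ Set.Icc (0:ℝ) 1} := by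
      apply convexHull_min _ hconv
      rintro w ⟨i, hi, rfl⟩
      exact hf i hi
    exact hsub hω

lemma vdual_iff (hn : 3 ≤ n) (x : Fin 3 → ℝ) :
    x ∈ VdualN n ↔ ∀ i < n, 0 ≤ dot3 x (omegaN n i) := by
  constructor
  · rintro ⟨c, hc, f, hf, rfl⟩ i hi
    rw [dot3_smul_left]
    exact mul_nonneg hc ((effN_iff n f).mp hf i hi).1
  · intro h
    set M : ℝ := 1 + ∑ i ∈ Finset.range n, dot3 x (omegaN n i) with hM
    have hMpos : 0 < M := by
      have : 0 ≤ ∑ i ∈ Finset.range n, dot3 x (omegaN n i) :=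
        Finset.sum_nonneg (fun i hi => h i (Finset.mem_range.mp hi))
      linarith
    refine ⟨M, hMpos.le, M⁻¹ • x, ?_, by rw [smul_smul, mul_inv_cancel₀ hMpos.ne', one_smul]⟩
    rw [effN_iff]
    intro i hi
    rw [dot3_smul_left]
    constructor
    · exact mul_nonneg (by positivity) (h i hi)
    · rw [inv_mul_le_iff₀ hMpos, mul_one]
      have hle : dot3 x (omegaN n i) ≤ ∑ j ∈ Finset.range n, dot3 x (omegaN n j) :=
        Finset.single_le_sum (fun j hj => h j (Finset.mem_range.mp hj)) (Finset.mem_range.mpr hi)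
      linarith

lemma bary_mem (hn : 3 ≤ n) : (![0,0,1] : Fin 3 → ℝ) ∈ OmegaN n := by
  have hne : (n:ℝ) ≠ 0 := (n_pos n hn).ne'
  have key : ∑ j ∈ Finset.range n, ((n:ℝ)⁻¹ • omegaN n j) = ![0,0,1] := by
    funext k
    rw [Finset.sum_apply]
    fin_cases k
    · simp [omegaN, ← Finset.mul_sum, (sum_cos_sin_eq_zero n hn).1]
    · simp [omegaN, ← Finset.mul_sum, (sum_cos_sin_eq_zero n hn).2]
    · simp [omegaN, Finset.sum_const, hne]
  rw [← key]
  apply (convex_convexHull ℝ _).sum_mem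
  · intro i _; positivity
  · rw [Finset.sum_const, Finset.card_range, nsmul_eq_mul, mul_inv_cancel₀ hne]
  · intro i hi; exact omega_mem n i (Finset.mem_range.mp hi)

lemma vpos_intro (hn : 3 ≤ n) (a b c : ℝ) (ha : 0 ≤ a) (hb : 0 ≤ b) (hc : 0 ≤ c)
    (i j : ℕ) (hi : i < n) (hj : j < n) :
    a • omegaN n i + b • omegaN n j + c • (![0,0,1] : Fin 3 → ℝ) ∈ VposN n := by
  rcases eq_or_lt_of_le (by linarith : (0:ℝ) ≤ a + b + c) with hs | hs
  · have ha0 : a = 0 := by linarith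
    have hb0 : b = 0 := by linarith
    have hc0 : c = 0 := by linarith
    refine ⟨0, le_refl 0, omegaN n i, omega_mem n i hi, ?_⟩
    rw [ha0, hb0, hc0]
    simp
  · set s := a + b + c with hsdef
    have hmem : ∀ k : Fin 3, (![omegaN n i, omegaN n j, ![0,0,1]] : Fin 3 → Fin 3 → ℝ) k ∈ OmegaN n := by
      intro k
      fin_cases k
      · exact omega_mem n i hi
      · exact omega_mem n j hj
      · exact bary_mem n hn
    have hcomb := (convex_convexHull ℝ {v : Fin 3 → ℝ | ∃ i < n, v = omegaN n i}).sum_mem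
      (t := (Finset.univ : Finset (Fin 3))) (w := ![a/s, b/s, c/s])
      (z := ![omegaN n i, omegaN n j, ![0,0,1]])
      (by intro k _; fin_cases k <;> [exact div_nonneg ha hs.le; exact div_nonneg hb hs.le; exact div_nonneg hc hs.le])
      (by rw [Fin.sum_univ_three]; simp only [Matrix.cons_val_zero, Matrix.cons_val_one, Matrix.head_cons, Matrix.cons_val_two, Matrix.tail_cons]; field_simp; exact hsdef.symm)
      (fun k _ => hmem k)
    rw [Fin.sum_univ_three] at hcomb
    simp only [Matrix.cons_val_zero, Matrix.cons_val_one, Matrix.head_cons, Matrix.cons_val_two, Matrix.tail_cons] at hcomb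
    refine ⟨s, hs.le, _, hcomb, ?_⟩
    rw [smul_add, smul_add, smul_smul, smul_smul, smul_smul]
    have hsne : s ≠ 0 := hs.ne'
    rw [mul_div_cancel₀ _ hsne, mul_div_cancel₀ _ hsne, mul_div_cancel₀ _ hsne]

end Aux3
section Aux4
open Real Finset
variable (n : ℕ)

lemma vpos_halfplane (w : Fin 3 → ℝ) (h : ∀ j < n, 0 ≤ dot3 (omegaN n j) w) :
    ∀ x ∈ VposN n, 0 ≤ dot3 x w := by
  rintro x ⟨c, hc, ω, hω, rfl⟩
  rw [dot3_smul_left]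
  apply mul_nonneg hc
  have heq : (fun v : Fin 3 → ℝ => dot3 v w) = fun v => dot3 w v :=
    funext fun v => dot3_comm v w
  have hL : IsLinearMap ℝ (fun v : Fin 3 → ℝ => dot3 v w) := by
    rw [heq]; exact isLinearMap_dot3 w
  have hconv : Convex ℝ {v : Fin 3 → ℝ | 0 ≤ dot3 v w} := convex_halfSpace_ge hL 0
  have := convexHull_min (fun v hv => by
    obtain ⟨j, hj, rfl⟩ := hv
    exact h j hj) hconv hω
  exact this

lemma exists_polar (y0 y1 : ℝ) (h : ¬ (y0 = 0 ∧ y1 = 0)) :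
    ∃ φ : ℝ, y0 = Real.sqrt (y0^2 + y1^2) * Real.cos φ ∧
             y1 = Real.sqrt (y0^2 + y1^2) * Real.sin φ := by
  set z : ℂ := ⟨y0, y1⟩ with hz
  have hzne : z ≠ 0 := by
    intro hz0
    rw [Complex.ext_iff] at hz0
    exact h ⟨hz0.1, hz0.2⟩
  have habs : ‖z‖ = Real.sqrt (y0^2 + y1^2) := by
    rw [Complex.norm_def, Complex.normSq_mk]
    ring_nf
  have habspos : 0 < ‖z‖ := by
    rw [norm_pos_iff]; exact hzne
  refine ⟨Complex.arg z, ?_, ?_⟩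
  · rw [← habs, Complex.cos_arg hzne]
    field_simp
    have hre : z.re = y0 := rfl
    rw [hre]
  · rw [← habs, Complex.sin_arg]
    field_simp
    have him : z.im = y1 := rfl
    rw [him]

/-- The core decomposition lemma. -/
lemma core_decomp (hn : 3 ≤ n) (y : Fin 3 → ℝ)
    (H : ∀ j : ℤ, 0 ≤ rN n * (y 0 * Real.cos ((2*(j:ℝ)+1+(n:ℝ)) * thetaN n)
        + y 1 * Real.sin ((2*(j:ℝ)+1+(n:ℝ)) * thetaN n)) + y 2) :
    y ∈ VposN n := by
  have hθpos := theta_pos n hn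
  have hθlt := theta_lt n hn
  have hθle3 : thetaN n ≤ π / 3 := by
    unfold thetaN
    apply div_le_div_of_nonneg_left Real.pi_pos.le (by norm_num)
    exact_mod_cast hn
  have hrpos := rN_pos n hn
  have hrc := rN_sq_cos n hn
  have hnθ := n_theta n hn
  set θ := thetaN n with hθdef
  set r := rN n with hrdef
  by_cases hzero : y 0 = 0 ∧ y 1 = 0
  · have h2 : 0 ≤ y 2 := by
      have := H 0
      rw [hzero.1, hzero.2] at this
      simpa using this
    refine ⟨y 2, h2, ![0,0,1], bary_mem n hn, ?_⟩
    funext k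
    fin_cases k <;> simp [hzero.1, hzero.2]
  · set ρ := Real.sqrt (y 0^2 + y 1^2) with hρdef
    have hρpos : 0 < ρ := by
      rcases not_and_or.mp hzero with h0 | h0
      · apply Real.sqrt_pos.mpr; positivity
      · apply Real.sqrt_pos.mpr; positivity
    obtain ⟨φ, hφ0, hφ1⟩ := exists_polar (y 0) (y 1) hzero
    rw [← hρdef] at hφ0 hφ1
    have h2θpos : 0 < 2*θ := by linarith
    set i : ℤ := ⌊φ / (2*θ)⌋ with hidef
    have hi1 : 2*(i:ℝ)*θ ≤ φ := by
      have := Int.floor_le (φ / (2*θ))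
      rw [← hidef] at this
      calc 2*(i:ℝ)*θ = (i:ℝ) * (2*θ) := by ring
        _ ≤ (φ / (2*θ)) * (2*θ) := by apply mul_le_mul_of_nonneg_right this h2θpos.le
        _ = φ := by field_simp
    have hi2 : φ < 2*((i:ℝ)+1)*θ := by
      have := Int.lt_floor_add_one (φ / (2*θ))
      rw [← hidef] at this
      calc φ = (φ / (2*θ)) * (2*θ) := by field_simp
        _ < ((i:ℝ)+1) * (2*θ) := by apply mul_lt_mul_of_pos_right this h2θpos
        _ = 2*((i:ℝ)+1)*θ := by ring
    have hsin2θ : 0 < Real.sin (2*θ) := by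
      apply Real.sin_pos_of_pos_of_lt_pi h2θpos
      linarith [Real.pi_pos]
    set a : ℝ := ρ * Real.sin (2*((i:ℝ)+1)*θ - φ) / (r * Real.sin (2*θ)) with hadef
    set b : ℝ := ρ * Real.sin (φ - 2*(i:ℝ)*θ) / (r * Real.sin (2*θ)) with hbdef
    have ha : 0 ≤ a := by
      apply div_nonneg _ (by positivity)
      apply mul_nonneg hρpos.le
      apply Real.sin_nonneg_of_nonneg_of_le_pi
      · linarith
      · linarith [Real.pi_pos]
    have hb : 0 ≤ b := by
      apply div_nonneg _ (by positivity)
      apply mul_nonneg hρpos.le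
      apply Real.sin_nonneg_of_nonneg_of_le_pi
      · linarith
      · linarith [Real.pi_pos]
    have hab : a + b = r * ρ * Real.cos (φ - (2*(i:ℝ)+1)*θ) := by
      rw [hadef, hbdef, ← add_div, div_eq_iff (by positivity : r * Real.sin (2*θ) ≠ 0)]
      have e1 : 2*((i:ℝ)+1)*θ - φ = θ - (φ - (2*(i:ℝ)+1)*θ) := by ring
      have e2 : φ - 2*(i:ℝ)*θ = θ + (φ - (2*(i:ℝ)+1)*θ) := by ring
      have e3 : (2:ℝ)*θ = θ + θ := by ring
      rw [e1, e2, e3, Real.sin_sub, Real.sin_add, Real.sin_add]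
      linear_combination (-2 * ρ * Real.sin θ * Real.cos (φ - (2*(i:ℝ)+1)*θ)) * hrc
    set c : ℝ := y 2 - (a + b) with hcdef
    have hc : 0 ≤ c := by
      have hH := H i
      have hang : (2*(i:ℝ)+1+(n:ℝ)) * θ = (2*(i:ℝ)+1)*θ + π := by
        rw [← hnθ]; ring
      rw [hang, Real.cos_add_pi, Real.sin_add_pi] at hH
      rw [hφ0, hφ1] at hH
      have hexp : r * (ρ * Real.cos φ * -Real.cos ((2*(i:ℝ)+1)*θ)
          + ρ * Real.sin φ * -Real.sin ((2*(i:ℝ)+1)*θ))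
          = - (r * ρ * Real.cos (φ - (2*(i:ℝ)+1)*θ)) := by
        rw [Real.cos_sub]; ring
      rw [hexp] at hH
      rw [hcdef, hab]
      linarith
    -- indices
    have hnZpos : (0:ℤ) < (n:ℤ) := by exact_mod_cast Nat.lt_of_lt_of_le (by norm_num) hn
    set i0 : ℕ := (i % (n:ℤ)).toNat with hi0def
    set i1 : ℕ := ((i+1) % (n:ℤ)).toNat with hi1def
    have hi0n : i0 < n := by
      have h1 : i % (n:ℤ) < (n:ℤ) := Int.emod_lt_of_pos _ hnZpos
      have h2 : 0 ≤ i % (n:ℤ) := Int.emod_nonneg _ hnZpos.ne'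
      omega
    have hi1n : i1 < n := by
      have h1 : (i+1) % (n:ℤ) < (n:ℤ) := Int.emod_lt_of_pos _ hnZpos
      have h2 : 0 ≤ (i+1) % (n:ℤ) := Int.emod_nonneg _ hnZpos.ne'
      omega
    have hcast0 : ((i0:ℕ):ℝ) = ((i % (n:ℤ) : ℤ):ℝ) := by
      rw [hi0def]
      exact_mod_cast congrArg (fun z : ℤ => (z:ℝ))
        (Int.toNat_of_nonneg (Int.emod_nonneg i hnZpos.ne'))
    have hcast1 : ((i1:ℕ):ℝ) = (((i+1) % (n:ℤ) : ℤ):ℝ) := by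
      rw [hi1def]
      exact_mod_cast congrArg (fun z : ℤ => (z:ℝ))
        (Int.toNat_of_nonneg (Int.emod_nonneg (i+1) hnZpos.ne'))
    -- trig periodicity for indices
    have hshift : ∀ m : ℤ, (Real.cos (2*((m % (n:ℤ) : ℤ):ℝ)*θ) = Real.cos (2*(m:ℝ)*θ))
        ∧ (Real.sin (2*((m % (n:ℤ) : ℤ):ℝ)*θ) = Real.sin (2*(m:ℝ)*θ)) := by
      intro m
      have hm : 2*(m % (n:ℤ)) + 2*(n:ℤ)*(m / (n:ℤ)) = 2*m := by
        have h := Int.emod_add_mul_ediv m (n:ℤ)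
        linarith
      have hc' := cos_shift n hn (2*(m % (n:ℤ))) (m / (n:ℤ))
      have hs' := sin_shift n hn (2*(m % (n:ℤ))) (m / (n:ℤ))
      rw [hm] at hc' hs'
      push_cast at hc' hs'
      constructor
      · rw [hθdef]; exact hc'.symm
      · rw [hθdef]; exact hs'.symm
    have hmem := vpos_intro n hn a b c ha hb hc i0 i1 hi0n hi1n
    have hy : y = a • omegaN n i0 + b • omegaN n i1 + c • ![0,0,1] := by
      funext k
      have hcos0 : Real.cos (2*((i0:ℕ):ℝ)*θ) = Real.cos (2*(i:ℝ)*θ) := by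
        rw [hcast0]; exact (hshift i).1
      have hsin0 : Real.sin (2*((i0:ℕ):ℝ)*θ) = Real.sin (2*(i:ℝ)*θ) := by
        rw [hcast0]; exact (hshift i).2
      have hcos1 : Real.cos (2*((i1:ℕ):ℝ)*θ) = Real.cos (2*((i:ℝ)+1)*θ) := by
        rw [hcast1]
        have := (hshift (i+1)).1
        rw [this]; congr 1; push_cast; ring
      have hsin1 : Real.sin (2*((i1:ℕ):ℝ)*θ) = Real.sin (2*((i:ℝ)+1)*θ) := by
        rw [hcast1]
        have := (hshift (i+1)).2
        rw [this]; congr 1; push_cast; ring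
      have hrne : r ≠ 0 := hrpos.ne'
      have hsne : Real.sin (2*θ) ≠ 0 := hsin2θ.ne'
      have e5 : 2*((i:ℝ)+1)*θ = 2*(i:ℝ)*θ + 2*θ := by ring
      fin_cases k
      · show y 0 = a * (r * Real.cos (2*((i0:ℕ):ℝ)*θ))
            + b * (r * Real.cos (2*((i1:ℕ):ℝ)*θ)) + c * 0
        rw [hcos0, hcos1, hφ0, hadef, hbdef, e5,
          Real.sin_sub, Real.sin_sub, Real.cos_add, Real.sin_add]
        field_simp
        linear_combination (-(ρ * Real.cos φ * Real.sin (2*θ)))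
          * Real.sin_sq_add_cos_sq (2*(i:ℝ)*θ)
      · show y 1 = a * (r * Real.sin (2*((i0:ℕ):ℝ)*θ))
            + b * (r * Real.sin (2*((i1:ℕ):ℝ)*θ)) + c * 0
        rw [hsin0, hsin1, hφ1, hadef, hbdef, e5,
          Real.sin_sub, Real.sin_sub, Real.sin_add, Real.cos_add]
        field_simp
        linear_combination (-(ρ * Real.sin φ * Real.sin (2*θ)))
          * Real.sin_sq_add_cos_sq (2*(i:ℝ)*θ)
      · show y 2 = a * 1 + b * 1 + c * 1
        rw [hcdef]
        ring
    rw [hy]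
    exact hmem

end Aux4
section Aux5
open Real Finset
variable (n : ℕ)

lemma index_shift (hn : 3 ≤ n) (m : ℤ) :
    Real.cos (2*(((m % (n:ℤ)):ℤ):ℝ)*thetaN n) = Real.cos (2*(m:ℝ)*thetaN n) ∧
    Real.sin (2*(((m % (n:ℤ)):ℤ):ℝ)*thetaN n) = Real.sin (2*(m:ℝ)*thetaN n) := by
  have hm : 2*(m % (n:ℤ)) + 2*(n:ℤ)*(m / (n:ℤ)) = 2*m := by
    have h := Int.emod_add_mul_ediv m (n:ℤ)
    linarith
  have hc' := cos_shift n hn (2*(m % (n:ℤ))) (m / (n:ℤ))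
  have hs' := sin_shift n hn (2*(m % (n:ℤ))) (m / (n:ℤ))
  rw [hm] at hc' hs'
  push_cast at hc' hs'
  constructor
  · exact hc'.symm
  · exact hs'.symm

lemma constraints_all (hn : 3 ≤ n) (x : Fin 3 → ℝ)
    (h : ∀ k < n, 0 ≤ dot3 x (omegaN n k)) (m : ℤ) :
    0 ≤ rN n * (x 0 * Real.cos (2*(m:ℝ)*thetaN n) + x 1 * Real.sin (2*(m:ℝ)*thetaN n)) + x 2 := by
  have hnZ : (0:ℤ) < (n:ℤ) := by exact_mod_cast Nat.lt_of_lt_of_le (by norm_num) hn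
  set k : ℕ := (m % (n:ℤ)).toNat with hkdef
  have hk : k < n := by
    have h1 : m % (n:ℤ) < (n:ℤ) := Int.emod_lt_of_pos _ hnZ
    have h2 : 0 ≤ m % (n:ℤ) := Int.emod_nonneg _ hnZ.ne'
    omega
  have hcast : ((k:ℕ):ℝ) = (((m % (n:ℤ)):ℤ):ℝ) := by
    rw [hkdef]
    exact_mod_cast congrArg (fun z : ℤ => (z:ℝ))
      (Int.toNat_of_nonneg (Int.emod_nonneg m hnZ.ne'))
  have h1 := h k hk
  rw [omegaN, dot3_eval] at h1
  have hc : Real.cos (2*((k:ℕ):ℝ)*thetaN n) = Real.cos (2*(m:ℝ)*thetaN n) := by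
    rw [hcast]; exact (index_shift n hn m).1
  have hs : Real.sin (2*((k:ℕ):ℝ)*thetaN n) = Real.sin (2*(m:ℝ)*thetaN n) := by
    rw [hcast]; exact (index_shift n hn m).2
  rw [hc, hs] at h1
  linarith [h1]

lemma TN_apply_even (hE : Even n) (v : Fin 3 → ℝ) :
    TN n v = ![Real.cos (thetaN n) * v 0 + Real.sin (thetaN n) * v 1,
               -Real.sin (thetaN n) * v 0 + Real.cos (thetaN n) * v 1, v 2] := by
  rw [TN, if_pos hE, Matrix.toLin'_apply]
  funext k
  fin_cases k <;>
    simp [Matrix.mulVec, dotProduct, Fin.sum_univ_three]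

lemma TN_odd (hO : Odd n) : TN n = LinearMap.id := by
  rw [TN, if_neg (Nat.not_even_iff_odd.mpr hO)]

/-- the halfplane vector at half-integer angle, used for even `n`. -/
lemma even_facet_nonneg (hn : 3 ≤ n) (hE : Even n) (i : ℕ) (x : Fin 3 → ℝ)
    (hx : x ∈ VposN n) :
    0 ≤ dot3 x ![rN n * Real.cos ((2*(i:ℝ)-1) * thetaN n),
                 rN n * Real.sin ((2*(i:ℝ)-1) * thetaN n), 1] := by
  apply vpos_halfplane n _ _ _ hx
  intro j hj
  rw [omegaN, dot3_eval']
  simp only [Matrix.cons_val_zero, Matrix.cons_val_one, Matrix.head_cons,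
    Matrix.cons_val_two, Matrix.tail_cons]
  have hrc := rN_sq_cos n hn
  have expand : rN n * Real.cos (2*(j:ℝ)*thetaN n) * (rN n * Real.cos ((2*(i:ℝ)-1) * thetaN n))
      + rN n * Real.sin (2*(j:ℝ)*thetaN n) * (rN n * Real.sin ((2*(i:ℝ)-1) * thetaN n)) + 1 * 1
      = rN n ^ 2 * Real.cos ((2*(j:ℝ)*thetaN n) - ((2*(i:ℝ)-1) * thetaN n)) + 1 := by
    rw [Real.cos_sub]; ring
  rw [expand]
  have hang : (2*(j:ℝ)*thetaN n) - ((2*(i:ℝ)-1) * thetaN n)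
      = ((2*(j:ℤ) - 2*(i:ℤ) + 1 : ℤ) : ℝ) * thetaN n := by push_cast; ring
  rw [hang]
  have hodd : Odd ((2*(j:ℤ) - 2*(i:ℤ) + 1) + (n:ℤ)) := by
    obtain ⟨h, hh⟩ := hE
    refine ⟨(j:ℤ) - (i:ℤ) + (h:ℤ), ?_⟩
    have : (n:ℤ) = (h:ℤ) + (h:ℤ) := by exact_mod_cast hh
    omega
  have hb := cos_bound n hn _ hodd
  nlinarith [rN_sq (n) hn, cos_theta_pos n hn, sq_nonneg (rN n)]

lemma odd_facet_nonneg (hn : 3 ≤ n) (hO : Odd n) (i : ℕ) (hi : i < n) (x : Fin 3 → ℝ)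
    (hx : x ∈ VposN n) : 0 ≤ dot3 x (omegaN n i) := by
  apply vpos_halfplane n _ _ _ hx
  intro j hj
  rw [omegaN, omegaN, dot3_eval']
  simp only [Matrix.cons_val_zero, Matrix.cons_val_one, Matrix.head_cons,
    Matrix.cons_val_two, Matrix.tail_cons]
  have hrc := rN_sq_cos n hn
  have expand : rN n * Real.cos (2*(j:ℝ)*thetaN n) * (rN n * Real.cos (2*(i:ℝ) * thetaN n))
      + rN n * Real.sin (2*(j:ℝ)*thetaN n) * (rN n * Real.sin (2*(i:ℝ) * thetaN n)) + 1 * 1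
      = rN n ^ 2 * Real.cos ((2*(j:ℝ)*thetaN n) - (2*(i:ℝ) * thetaN n)) + 1 := by
    rw [Real.cos_sub]; ring
  rw [expand]
  have hang : (2*(j:ℝ)*thetaN n) - (2*(i:ℝ) * thetaN n)
      = ((2*(j:ℤ) - 2*(i:ℤ) : ℤ) : ℝ) * thetaN n := by push_cast; ring
  rw [hang]
  have hodd : Odd ((2*(j:ℤ) - 2*(i:ℤ)) + (n:ℤ)) := by
    obtain ⟨h, hh⟩ := hO
    refine ⟨(j:ℤ) - (i:ℤ) + (h:ℤ), ?_⟩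
    have : (n:ℤ) = 2*(h:ℤ) + 1 := by exact_mod_cast hh
    omega
  have hb := cos_bound n hn _ hodd
  nlinarith [rN_sq (n) hn, cos_theta_pos n hn, sq_nonneg (rN n)]

end Aux5
section Aux6
open Real Finset
variable (n : ℕ)

lemma even_image (hn : 3 ≤ n) (hE : Even n) : TN n '' VdualN n = VposN n := by
  obtain ⟨h, hh⟩ := hE
  apply Set.eq_of_subset_of_subset
  · rintro y ⟨x, hx, rfl⟩
    have Hall := constraints_all n hn x ((vdual_iff n hn x).mp hx)
    apply core_decomp n hn
    intro j
    rw [TN_apply_even n ⟨h, hh⟩ x]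
    simp only [Matrix.cons_val_zero, Matrix.cons_val_one, Matrix.head_cons,
      Matrix.cons_val_two, Matrix.tail_cons]
    have key := Hall ((j:ℤ) + 1 + (h:ℤ))
    have hang : 2*(((j:ℤ) + 1 + (h:ℤ) : ℤ):ℝ)*thetaN n
        = (2*(j:ℝ)+1+(n:ℝ)) * thetaN n + thetaN n := by
      have : (n:ℝ) = (h:ℝ) + (h:ℝ) := by exact_mod_cast hh
      rw [this]; push_cast; ring
    rw [hang, Real.cos_add, Real.sin_add] at key
    nlinarith [key]
  · intro x hx
    set θ := thetaN n with hθdef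
    refine ⟨![Real.cos θ * x 0 - Real.sin θ * x 1,
              Real.sin θ * x 0 + Real.cos θ * x 1, x 2], ?_, ?_⟩
    · rw [vdual_iff n hn]
      intro i hi
      have hf := even_facet_nonneg n hn ⟨h, hh⟩ i x hx
      rw [dot3_eval] at hf
      rw [omegaN, dot3_eval]
      simp only [Matrix.cons_val_zero, Matrix.cons_val_one, Matrix.head_cons,
        Matrix.cons_val_two, Matrix.tail_cons]
      rw [show (2*(i:ℝ)-1)*θ = 2*(i:ℝ)*θ - θ from by ring, Real.cos_sub, Real.sin_sub] at hf
      nlinarith [hf]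
    · rw [TN_apply_even n ⟨h, hh⟩]
      funext k
      fin_cases k
      · show Real.cos θ * (Real.cos θ * x 0 - Real.sin θ * x 1)
            + Real.sin θ * (Real.sin θ * x 0 + Real.cos θ * x 1) = x 0
        linear_combination (x 0) * Real.sin_sq_add_cos_sq θ
      · show -Real.sin θ * (Real.cos θ * x 0 - Real.sin θ * x 1)
            + Real.cos θ * (Real.sin θ * x 0 + Real.cos θ * x 1) = x 1
        linear_combination (x 1) * Real.sin_sq_add_cos_sq θ
      · rfl

lemma odd_eq (hn : 3 ≤ n) (hO : Odd n) : VdualN n = VposN n := by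
  obtain ⟨h, hh⟩ := hO
  apply Set.eq_of_subset_of_subset
  · intro x hx
    have Hall := constraints_all n hn x ((vdual_iff n hn x).mp hx)
    apply core_decomp n hn
    intro j
    have key := Hall ((j:ℤ) + (h:ℤ) + 1)
    have hang : 2*(((j:ℤ) + (h:ℤ) + 1 : ℤ):ℝ)*thetaN n
        = (2*(j:ℝ)+1+(n:ℝ)) * thetaN n := by
      have : (n:ℝ) = 2*(h:ℝ) + 1 := by exact_mod_cast hh
      rw [this]; push_cast; ring
    rw [hang] at key
    exact key
  · intro x hx
    rw [vdual_iff n hn]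
    intro i hi
    exact odd_facet_nonneg n hn ⟨h, hh⟩ i hi x hx

lemma TN_eN_even (hn : 3 ≤ n) (hE : Even n) (i : ℕ) :
    TN n (eN n i) = (1 / 2 : ℝ) • omegaN n i := by
  rw [eN, if_pos hE, map_smul, TN_apply_even n hE]
  funext k
  set θ := thetaN n with hθdef
  fin_cases k
  · show (1/2 : ℝ) * (Real.cos θ * (rN n * Real.cos ((2*(i:ℝ)+1)*θ))
        + Real.sin θ * (rN n * Real.sin ((2*(i:ℝ)+1)*θ)))
        = (1/2 : ℝ) * (rN n * Real.cos (2*(i:ℝ)*θ))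
    rw [show 2*(i:ℝ)*θ = (2*(i:ℝ)+1)*θ - θ from by ring, Real.cos_sub]
    ring
  · show (1/2 : ℝ) * (-Real.sin θ * (rN n * Real.cos ((2*(i:ℝ)+1)*θ))
        + Real.cos θ * (rN n * Real.sin ((2*(i:ℝ)+1)*θ)))
        = (1/2 : ℝ) * (rN n * Real.sin (2*(i:ℝ)*θ))
    rw [show 2*(i:ℝ)*θ = (2*(i:ℝ)+1)*θ - θ from by ring, Real.sin_sub]
    ring
  · rfl

end Aux6

/-- `T_n` maps the dual cone onto the positive cone; for even `n`,
`T_n(e_n(i)) = ½ ω_n(i)`, and for odd `n`, `e_n(i) = R_n ω_n(i)` and the theory is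
self-dual.  In particular every regular polygon theory is weakly self-dual and every
odd-sided one is self-dual. -/
theorem polygon_weak_self_duality (n : ℕ) (hn : 3 ≤ n) :
    (TN n) '' VdualN n = VposN n ∧
    (Even n → ∀ i < n, TN n (eN n i) = (1 / 2 : ℝ) • omegaN n i) ∧
    (Odd n → (∀ i < n, eN n i = RN n • omegaN n i) ∧ VdualN n = VposN n) := by
  refine ⟨?_, ?_, ?_⟩
  · rcases Nat.even_or_odd n with hE | hO
    · exact even_image n hn hE
    · rw [TN_odd n hO]
      simp only [LinearMap.id_coe, Set.image_id]
      exact odd_eq n hn hO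
  · intro hE i _
    exact TN_eN_even n hn hE i
  · intro hO
    refine ⟨fun i _ => ?_, odd_eq n hn hO⟩
    rw [eN, if_neg (Nat.not_even_iff_odd.mpr hO), omegaN]
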